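/- Let K be an algebraically closed field and g > 1 an integer satisfying Condition (*). Let I, J ⊆ M(2g+1) be g-element subsets, let ε1, ε2 be distinct elements of I and ε3, ε4 distinct elements of ∁I, and set η_i = η(ε_i) for i = 1, 2, 3, 4. Then the polynomial in the variable b given by [Ψ_{J,b}, Ψ_{∁J,b}]_{η1,η2} · [Ψ_{J,b}, Ψ_{∁J,b}]_{η3,η4} · b − [Η_{∁I}, Ψ_{J,b}]_{η1,η2} · [Η_I, Ψ_{∁J,b}]_{η3,η4} has degree exactly 4g − 1 in b; in particular, it is a nonzero polynomial in b. -/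

import Mathlib

open Polynomial Finset

/-- `Mset K n` is the set of `n`-th roots of unity in `K` other than `1`. -/
noncomputable def Mset (K : Type*) [Field K] (n : ℕ) : Finset K :=
  open scoped Classical in
  (Polynomial.nthRootsFinset n (1 : K)).filter (· ≠ 1)

/-- `Ψ_{J,b}(c) = ∏_{ε ∈ J} (c + b·η(ε))`, with `η(ε) = 1/(ε-1)`, regarded as a
polynomial in the indeterminate `b` (named `X` here). -/
noncomputable def PsiB {K : Type*} [Field K] (J : Finset K) (c : K) : K[X] :=
  ∏ ε ∈ J, (C c + C ((ε - 1)⁻¹) * X)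

/-- `Η_I(c) = ∏_{ε ∈ I} (c - η(ε))`, with `η(ε) = 1/(ε-1)` (a scalar, independent of `b`). -/
noncomputable def EtaV {K : Type*} [Field K] (I : Finset K) (c : K) : K :=
  ∏ ε ∈ I, (c - (ε - 1)⁻¹)

lemma mem_Mset_iff {K : Type*} [Field K] {n : ℕ} (hn : 0 < n) {ε : K} :
    ε ∈ Mset K n ↔ ε ^ n = 1 ∧ ε ≠ 1 := by
  classical
  simp [Mset, Polynomial.mem_nthRootsFinset hn]

lemma Mset_eq_image {K : Type*} [Field K] [DecidableEq K] {n : ℕ} (hn : 2 ≤ n) {ζ : K}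
    (hζ : IsPrimitiveRoot ζ n) : Mset K n = (Finset.Ico 1 n).image (ζ ^ ·) := by
  classical
  have hn0 : 0 < n := by omega
  have hinj : Set.InjOn (ζ ^ ·) (Finset.Ico 1 n : Finset ℕ) := by
    intro i hi j hj hij
    simp only [coe_Ico, Set.mem_Ico] at hi hj
    exact hζ.pow_inj hi.2 hj.2 hij
  have hsub : (Finset.Ico 1 n).image (ζ ^ ·) ⊆ Mset K n := by
    intro x hx
    simp only [mem_image, mem_Ico] at hx
    obtain ⟨i, ⟨hi1, hi2⟩, rfl⟩ := hx
    rw [mem_Mset_iff hn0]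
    constructor
    · rw [← pow_mul, mul_comm, pow_mul, hζ.pow_eq_one, one_pow]
    · intro h
      have := hζ.pow_eq_one_iff_dvd i |>.mp h
      exact absurd (Nat.le_of_dvd (by omega) this) (by omega)
  have hcard1 : ((Finset.Ico 1 n).image (ζ ^ ·)).card = n - 1 := by
    rw [Finset.card_image_of_injOn hinj, Nat.card_Ico]
  have hcard2 : (Mset K n).card = n - 1 := by
    classical
    have h1 : (1 : K) ∈ Polynomial.nthRootsFinset n (1 : K) :=
      (Polynomial.mem_nthRootsFinset hn0 (1 : K)).2 (one_pow n)
    have he : Mset K n = (Polynomial.nthRootsFinset n (1 : K)).erase 1 := by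
      ext x; simp [Mset, Finset.mem_erase, and_comm]
    rw [he, Finset.card_erase_of_mem h1, hζ.card_nthRootsFinset]
  exact (Finset.eq_of_subset_of_card_le hsub (by omega)).symm

lemma card_Mset {K : Type*} [Field K] [DecidableEq K] {n : ℕ} (hn : 2 ≤ n) {ζ : K}
    (hζ : IsPrimitiveRoot ζ n) : (Mset K n).card = n - 1 := by
  rw [Mset_eq_image hn hζ, Finset.card_image_of_injOn, Nat.card_Ico]
  intro i hi j hj hij
  simp only [coe_Ico, Set.mem_Ico] at hi hj
  exact hζ.pow_inj hi.2 hj.2 hij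

lemma sum_Mset {K : Type*} [Field K] [DecidableEq K] {n : ℕ} (hn : 2 ≤ n) {ζ : K}
    (hζ : IsPrimitiveRoot ζ n) : ∑ ε ∈ Mset K n, ε = -1 := by
  have hinj : Set.InjOn (ζ ^ ·) (Finset.Ico 1 n : Finset ℕ) := by
    intro i hi j hj hij
    simp only [coe_Ico, Set.mem_Ico] at hi hj
    exact hζ.pow_inj hi.2 hj.2 hij
  rw [Mset_eq_image hn hζ, Finset.sum_image hinj]
  have hgeom : ∑ i ∈ Finset.range n, ζ ^ i = 0 := by
    have h1 : ζ ≠ 1 := by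
      intro h
      have := hζ.pow_inj (by omega : 1 < n) (by omega : 0 < n) (by simp [h])
      omega
    have := geom_sum_mul ζ n
    rw [hζ.pow_eq_one, sub_self] at this
    have h2 : ζ - 1 ≠ 0 := sub_ne_zero.mpr h1
    exact (mul_eq_zero.mp this).resolve_right h2
  have hsplit : ∑ i ∈ Finset.range n, ζ ^ i = ζ ^ 0 + ∑ i ∈ Finset.Ico 1 n, ζ ^ i := by
    rw [Finset.range_eq_Ico]
    exact Finset.sum_eq_sum_Ico_succ_bot (by omega) _
  rw [hsplit, pow_zero] at hgeom
  have := eq_neg_of_add_eq_zero_right hgeom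
  simpa using this

section KeyChar0
variable {K : Type*} [Field K]

lemma char0_half_not_integral [CharZero K] {x : K} (hx : IsIntegral ℤ x)
    (h : x + x = -1) : False := by
  have hx2 : x = algebraMap ℚ K (-1/2) := by
    have h2 : (2 : K) ≠ 0 := two_ne_zero
    rw [map_div₀, map_neg, map_one, map_ofNat]
    field_simp
    linear_combination h
  rw [hx2] at hx
  have hinj : Function.Injective (algebraMap ℚ K) := (algebraMap ℚ K).injective
  have hQ : IsIntegral ℤ ((-1/2 : ℚ)) :=
    (isIntegral_algHom_iff ((algebraMap ℚ K).toIntAlgHom) hinj).mp hx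
  obtain ⟨z, hz⟩ := IsIntegrallyClosed.isIntegral_iff.mp hQ
  have : (z : ℚ) = -1/2 := hz
  have h2 : ((2 * z : ℤ) : ℚ) = ((-1 : ℤ) : ℚ) := by push_cast; linarith
  have := Int.cast_injective (α := ℚ) h2
  omega

end KeyChar0

lemma pow_inj_of_lt_orderOf' {M : Type*} [Monoid M] {a : M} {k l : ℕ}
    (hk : k < orderOf a) (hl : l < orderOf a) (h : a ^ k = a ^ l) : k = l :=
  pow_injOn_Iio_orderOf (Set.mem_Iio.mpr hk) (Set.mem_Iio.mpr hl) h

lemma charp_rel_impossible {K : Type*} [Field K] [DecidableEq K] {p n : ℕ}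
    [hpf : Fact p.Prime] [CharP K p] {ζ : K} (hζ : IsPrimitiveRoot ζ n) (hn : 3 ≤ n)
    (hord : orderOf ((p : ℕ) : ZMod n) = n - 1)
    (J : Finset K) (hJ : J ⊆ Mset K n)
    (heq : ∑ ε ∈ J, ε = ∑ ε ∈ Mset K n \ J, ε) : False := by
  letI : Algebra (ZMod p) K := ZMod.algebra _ _
  have hn2 : 2 ≤ n := by omega
  set S : Finset ℕ := Finset.Ico 1 n with hS
  set d : ℕ → ZMod p := fun i => if ζ ^ i ∈ J then 1 else -1 with hd
  set P : (ZMod p)[X] := ∑ i ∈ S, C (d i) * X ^ i with hP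
  have coeffP : ∀ k, P.coeff k = if k ∈ S then d k else 0 := by
    intro k
    rw [hP, finset_sum_coeff]
    simp only [coeff_C_mul, coeff_X_pow, mul_ite, mul_one, mul_zero]
    exact Finset.sum_ite_eq S k d
  have dne : ∀ i, d i ≠ 0 := by
    intro i
    by_cases h : ζ ^ i ∈ J <;> simp [hd, h]
  have hP0 : P.coeff 0 = 0 := by
    rw [coeffP]; simp [hS]
  have hPtop : P.coeff (n - 1) ≠ 0 := by
    rw [coeffP, if_pos (by simp [hS, Finset.mem_Ico]; omega)]
    exact dne _
  have hPne : P ≠ 0 := fun h => hPtop (by simp [h])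
  have hPdeg : P.natDegree = n - 1 := by
    refine le_antisymm (natDegree_le_iff_coeff_eq_zero.mpr fun N hN => ?_)
      (le_natDegree_of_ne_zero hPtop)
    rw [coeffP, if_neg (by simp [hS, Finset.mem_Ico]; omega)]
  have hinj : Set.InjOn (ζ ^ ·) (S : Set ℕ) := by
    intro i hi j hj hij
    simp only [hS, coe_Ico, Set.mem_Ico] at hi hj
    exact hζ.pow_inj hi.2 hj.2 hij
  have hM : Mset K n = S.image (ζ ^ ·) := Mset_eq_image hn2 hζ
  -- the two filtered images
  have himg1 : (S.filter (fun i => ζ ^ i ∈ J)).image (ζ ^ ·) = J := by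
    ext x
    simp only [Finset.mem_image, Finset.mem_filter]
    constructor
    · rintro ⟨i, ⟨hiS, hiJ⟩, rfl⟩; exact hiJ
    · intro hx
      have := hJ hx
      rw [hM, Finset.mem_image] at this
      obtain ⟨i, hiS, rfl⟩ := this
      exact ⟨i, ⟨hiS, hx⟩, rfl⟩
  have himg2 : (S.filter (fun i => ζ ^ i ∉ J)).image (ζ ^ ·) = Mset K n \ J := by
    ext x
    simp only [Finset.mem_image, Finset.mem_filter, Finset.mem_sdiff]
    constructor
    · rintro ⟨i, ⟨hiS, hiJ⟩, rfl⟩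
      refine ⟨?_, hiJ⟩
      rw [hM, Finset.mem_image]; exact ⟨i, hiS, rfl⟩
    · rintro ⟨hx1, hx2⟩
      rw [hM, Finset.mem_image] at hx1
      obtain ⟨i, hiS, rfl⟩ := hx1
      exact ⟨i, ⟨hiS, hx2⟩, rfl⟩
  have haeval : aeval ζ P = 0 := by
    have e1 : aeval ζ P = ∑ i ∈ S, algebraMap (ZMod p) K (d i) * ζ ^ i := by
      rw [hP]; simp [map_sum, aeval_C]
    have e2 : ∀ i, algebraMap (ZMod p) K (d i) * ζ ^ i
        = if ζ ^ i ∈ J then ζ ^ i else -(ζ ^ i) := by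
      intro i
      rw [hd]
      by_cases h : ζ ^ i ∈ J <;> simp [h]
    rw [e1, Finset.sum_congr rfl fun i _ => e2 i, Finset.sum_ite]
    have s1 : ∑ ε ∈ J, ε = ∑ i ∈ S.filter (fun i => ζ ^ i ∈ J), ζ ^ i := by
      conv_lhs => rw [← himg1]
      exact Finset.sum_image fun i hi j hj hij =>
        hinj (Finset.mem_coe.mpr (Finset.mem_of_mem_filter i hi))
          (Finset.mem_coe.mpr (Finset.mem_of_mem_filter j hj)) hij
    have s2 : ∑ ε ∈ Mset K n \ J, ε = ∑ i ∈ S.filter (fun i => ζ ^ i ∉ J), ζ ^ i := by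
      conv_lhs => rw [← himg2]
      exact Finset.sum_image fun i hi j hj hij =>
        hinj (Finset.mem_coe.mpr (Finset.mem_of_mem_filter i hi))
          (Finset.mem_coe.mpr (Finset.mem_of_mem_filter j hj)) hij
    rw [Finset.sum_neg_distrib, ← s1, ← s2, heq, add_neg_cancel]
  have hζint : IsIntegral (ZMod p) ζ := by
    refine ⟨X ^ n - C 1, monic_X_pow_sub_C 1 (by omega), ?_⟩
    simp [hζ.pow_eq_one]
  set m : (ZMod p)[X] := minpoly (ZMod p) ζ with hm
  have hmne : m ≠ 0 := minpoly.ne_zero hζint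
  have hdvd : m ∣ P := minpoly.dvd _ _ haeval
  have hmd_le : m.natDegree ≤ n - 1 := hPdeg ▸ natDegree_le_of_dvd hdvd hPne
  have hfr : ∀ x : K, aeval x m = 0 → aeval (x ^ p) m = 0 := by
    intro x hx
    have h1 : aeval x (Polynomial.expand (ZMod p) p m) = aeval (x ^ p) m :=
      Polynomial.expand_aeval p m x
    rw [← h1, ZMod.expand_card, map_pow, hx, zero_pow hpf.out.ne_zero]
  have hroots : ∀ k : ℕ, aeval (ζ ^ p ^ k) m = 0 := by
    intro k
    induction k with
    | zero => rw [pow_zero, pow_one]; exact minpoly.aeval (ZMod p) ζ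
    | succ k ih =>
      have e : ζ ^ p ^ (k + 1) = (ζ ^ p ^ k) ^ p := by
        rw [← pow_mul, pow_succ]
      rw [e]; exact hfr _ ih
  have hdist : Set.InjOn (fun k => ζ ^ p ^ k) (Finset.range (n - 1) : Set ℕ) := by
    intro k hk l hl h
    simp only [coe_range, Set.mem_Iio] at hk hl
    have hords : orderOf ζ = n := hζ.eq_orderOf.symm
    have hmod : p ^ k ≡ p ^ l [MOD n] := by
      have e1 := pow_mod_orderOf ζ (p ^ k)
      have e2 := pow_mod_orderOf ζ (p ^ l)
      rw [hords] at e1 e2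
      have h1 : ζ ^ (p ^ k % n) = ζ ^ (p ^ l % n) := by
        rw [e1, e2]; exact h
      have hn0 : 0 < n := by omega
      have := hζ.pow_inj (Nat.mod_lt _ hn0) (Nat.mod_lt _ hn0) h1
      exact this
    have hcast : ((p ^ k : ℕ) : ZMod n) = ((p ^ l : ℕ) : ZMod n) :=
      (ZMod.natCast_eq_natCast_iff _ _ _).mpr hmod
    push_cast at hcast
    exact pow_inj_of_lt_orderOf' (hord ▸ hk) (hord ▸ hl) hcast
  set φ := algebraMap (ZMod p) K with hφ
  set mm := m.map φ with hmm
  have hmm0 : mm ≠ 0 := Polynomial.map_ne_zero hmne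
  have hTsub : (Finset.range (n - 1)).image (fun k => ζ ^ p ^ k) ⊆ mm.roots.toFinset := by
    intro x hx
    rw [Finset.mem_image] at hx
    obtain ⟨k, _, rfl⟩ := hx
    rw [Multiset.mem_toFinset, mem_roots hmm0]
    rw [hmm, IsRoot.def, Polynomial.eval_map, ← aeval_def]
    exact hroots k
  have hge : n - 1 ≤ m.natDegree := by
    calc n - 1 = ((Finset.range (n - 1)).image (fun k => ζ ^ p ^ k)).card := by
          rw [Finset.card_image_of_injOn hdist, Finset.card_range]
      _ ≤ mm.roots.toFinset.card := Finset.card_le_card hTsub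
      _ ≤ Multiset.card mm.roots := Multiset.toFinset_card_le _
      _ ≤ mm.natDegree := Polynomial.card_roots' mm
      _ = m.natDegree := Polynomial.natDegree_map φ
  obtain ⟨R, hR⟩ := hdvd
  have hRne : R ≠ 0 := by
    rintro rfl
    rw [mul_zero] at hR
    exact hPne hR
  have hnd : P.natDegree = m.natDegree + R.natDegree := by
    rw [hR, natDegree_mul hmne hRne]
  have hR0 : R.natDegree = 0 := by omega
  have hm0 : m.coeff 0 ≠ 0 :=
    minpoly.coeff_zero_ne_zero hζint (hζ.ne_zero (by omega))
  have h0 : (0 : ZMod p) = m.coeff 0 * R.coeff 0 := by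
    rw [← hP0, hR, mul_coeff_zero]
  have hRc0 : R.coeff 0 = 0 := by
    rcases mul_eq_zero.mp h0.symm with h | h
    · exact absurd h hm0
    · exact h
  exact hRne (by rw [eq_C_of_natDegree_eq_zero hR0, hRc0, map_zero])

lemma PsiB_eq {K : Type*} [Field K] {S : Finset K} (hS : ∀ ε ∈ S, ε ≠ 1) (c : K) :
    PsiB S c = C (∏ ε ∈ S, (ε - 1)⁻¹) * ∏ ε ∈ S, (X + C (c * (ε - 1))) := by
  rw [PsiB, map_prod, ← Finset.prod_mul_distrib]
  refine Finset.prod_congr rfl fun ε hε => ?_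
  have h1 : ε - 1 ≠ 0 := sub_ne_zero.mpr (hS ε hε)
  rw [mul_add, ← C_mul]
  have : (ε - 1)⁻¹ * (c * (ε - 1)) = c := by field_simp
  rw [this, add_comm]

lemma PsiB_degree_le {K : Type*} [Field K] (S : Finset K) (c : K) :
    (PsiB S c).degree ≤ (S.card : WithBot ℕ) := by
  have h1 : ∀ ε ∈ S, (C c + C ((ε - 1)⁻¹) * X).degree ≤ (1 : WithBot ℕ) := by
    intro ε _
    rw [add_comm]
    exact Polynomial.degree_linear_le
  refine (Polynomial.degree_prod_le _ _).trans ((Finset.sum_le_sum h1).trans ?_)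
  rw [Finset.sum_const, Nat.smul_one_eq_cast]

-- the bracket degree lemma
lemma bracket_degree {K : Type*} [Field K] [DecidableEq K] {S T : Finset K}
    (hTS : T ⊆ S) (hS1 : ∀ ε ∈ S, ε ≠ 1) (hne : S.Nonempty)
    (hcards : 2 * T.card = S.card)
    {c d : K} (hcd : c ≠ d)
    (hsum : (∑ ε ∈ T, ε) ≠ ∑ ε ∈ S \ T, ε) :
    (PsiB T c * PsiB (S \ T) d - PsiB T d * PsiB (S \ T) c).degree
      = ((S.card - 1 : ℕ) : WithBot ℕ) := by
  have hT1 : ∀ ε ∈ T, ε ≠ 1 := fun ε hε => hS1 ε (hTS hε)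
  have hC1 : ∀ ε ∈ S \ T, ε ≠ 1 := fun ε hε => hS1 ε (Finset.mem_sdiff.mp hε).1
  set L : K := ∏ ε ∈ S, (ε - 1)⁻¹ with hL
  have hLne : L ≠ 0 := by
    rw [hL]
    refine Finset.prod_ne_zero_iff.mpr fun ε hε => ?_
    exact inv_ne_zero (sub_ne_zero.mpr (hS1 ε hε))
  set f1 : K → K := fun ε => if ε ∈ T then c * (ε - 1) else d * (ε - 1) with hf1
  set f2 : K → K := fun ε => if ε ∈ T then d * (ε - 1) else c * (ε - 1) with hf2
  have key : ∀ (u v : K), (fun ε => if ε ∈ T then u * (ε - 1) else v * (ε - 1)) = fun ε =>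
      (if ε ∈ T then u * (ε - 1) else v * (ε - 1)) := fun _ _ => rfl
  have prodeq : ∀ (u v : K), PsiB T u * PsiB (S \ T) v
      = C L * ∏ ε ∈ S, (X + C (if ε ∈ T then u * (ε - 1) else v * (ε - 1))) := by
    intro u v
    rw [PsiB_eq hT1, PsiB_eq hC1]
    have e1 : ∏ ε ∈ T, (X + C (u * (ε - 1)))
        = ∏ ε ∈ T, (X + C (if ε ∈ T then u * (ε - 1) else v * (ε - 1))) :=
      Finset.prod_congr rfl fun ε hε => by rw [if_pos hε]
    have e2 : ∏ ε ∈ S \ T, (X + C (v * (ε - 1)))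
        = ∏ ε ∈ S \ T, (X + C (if ε ∈ T then u * (ε - 1) else v * (ε - 1))) :=
      Finset.prod_congr rfl fun ε hε => by rw [if_neg (Finset.mem_sdiff.mp hε).2]
    have e3 : (∏ ε ∈ T, (ε - 1)⁻¹) * ∏ ε ∈ S \ T, (ε - 1)⁻¹ = L := by
      rw [hL, mul_comm, Finset.prod_sdiff hTS]
    have e4 : (∏ ε ∈ T, (X + C (if ε ∈ T then u * (ε - 1) else v * (ε - 1)))) *
        ∏ ε ∈ S \ T, (X + C (if ε ∈ T then u * (ε - 1) else v * (ε - 1)))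
        = ∏ ε ∈ S, (X + C (if ε ∈ T then u * (ε - 1) else v * (ε - 1))) := by
      rw [mul_comm, Finset.prod_sdiff hTS]
    rw [e1, e2]
    rw [show ∀ a b p q : K[X], a * p * (b * q) = a * b * (p * q) from fun a b p q => by ring]
    rw [← C_mul, e3, e4]
  have hmon : ∀ (h : K → K), (∏ ε ∈ S, (X + C (h ε))).Monic :=
    fun h => monic_prod_of_monic _ _ fun ε _ => monic_X_add_C _
  have hdeg : ∀ (h : K → K), (∏ ε ∈ S, (X + C (h ε))).natDegree = S.card := by
    intro h
    rw [natDegree_prod_of_monic _ _ fun ε _ => monic_X_add_C _]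
    simp
  have hnext : ∀ (h : K → K), (∏ ε ∈ S, (X + C (h ε))).coeff (S.card - 1) = ∑ ε ∈ S, h ε := by
    intro h
    have h0 : 0 < (∏ ε ∈ S, (X + C (h ε))).natDegree := by
      rw [hdeg]; exact Finset.card_pos.mpr hne
    have hh := Polynomial.nextCoeff_of_natDegree_pos h0
    rw [hdeg] at hh
    rw [← hh, Monic.nextCoeff_prod _ _ fun ε _ => monic_X_add_C _]
    simp
  have hsplit : ∀ u v : K, ∑ ε ∈ S, (if ε ∈ T then u * (ε - 1) else v * (ε - 1))
      = u * ∑ ε ∈ T, (ε - 1) + v * ∑ ε ∈ S \ T, (ε - 1) := by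
    intro u v
    have h1 : ∑ ε ∈ T, (if ε ∈ T then u * (ε - 1) else v * (ε - 1))
        = u * ∑ ε ∈ T, (ε - 1) := by
      rw [Finset.mul_sum]; exact Finset.sum_congr rfl fun ε hε => if_pos hε
    have h2 : ∑ ε ∈ S \ T, (if ε ∈ T then u * (ε - 1) else v * (ε - 1))
        = v * ∑ ε ∈ S \ T, (ε - 1) := by
      rw [Finset.mul_sum]
      exact Finset.sum_congr rfl fun ε hε => if_neg (Finset.mem_sdiff.mp hε).2
    rw [← Finset.sum_sdiff hTS, h1, h2, add_comm]
  have hcc : ((S \ T).card : K) = (T.card : K) := by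
    rw [Finset.card_sdiff_of_subset hTS]
    congr 1
    omega
  have hsub : (∑ ε ∈ T, (ε - 1)) - ∑ ε ∈ S \ T, (ε - 1)
      = (∑ ε ∈ T, ε) - ∑ ε ∈ S \ T, ε := by
    rw [Finset.sum_sub_distrib, Finset.sum_sub_distrib, Finset.sum_const, Finset.sum_const,
      nsmul_eq_mul, nsmul_eq_mul, mul_one, mul_one, hcc]
    ring
  set Q1 : K[X] := ∏ ε ∈ S, (X + C (if ε ∈ T then c * (ε - 1) else d * (ε - 1))) with hQQ1
  set Q2 : K[X] := ∏ ε ∈ S, (X + C (if ε ∈ T then d * (ε - 1) else c * (ε - 1))) with hQQ2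
  have hcoeff : (Q1 - Q2).coeff (S.card - 1)
      = (c - d) * ((∑ ε ∈ T, ε) - ∑ ε ∈ S \ T, ε) := by
    rw [coeff_sub, hQQ1, hQQ2,
      hnext (fun ε => if ε ∈ T then c * (ε - 1) else d * (ε - 1)),
      hnext (fun ε => if ε ∈ T then d * (ε - 1) else c * (ε - 1)),
      hsplit c d, hsplit d c, ← hsub]
    ring
  have hQne : (Q1 - Q2).coeff (S.card - 1) ≠ 0 := by
    rw [hcoeff]
    exact mul_ne_zero (sub_ne_zero.mpr hcd) (sub_ne_zero.mpr hsum)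
  have hdlt : (Q1 - Q2).degree < (S.card : WithBot ℕ) := by
    have hd1 : Q1.degree = (S.card : WithBot ℕ) := by
      rw [Polynomial.degree_eq_natDegree (hmon _).ne_zero, hdeg]
    have hd2 : Q2.degree = (S.card : WithBot ℕ) := by
      rw [Polynomial.degree_eq_natDegree (hmon _).ne_zero, hdeg]
    have := Polynomial.degree_sub_lt (hd1.trans hd2.symm) (hmon _).ne_zero
      (by rw [hQQ1, hQQ2, Monic.leadingCoeff (hmon _), Monic.leadingCoeff (hmon _)])
    rw [hd1] at this
    exact this
  have hdle : (Q1 - Q2).degree ≤ ((S.card - 1 : ℕ) : WithBot ℕ) := by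
    rcases hd : (Q1 - Q2).degree with _ | k
    · exact bot_le
    · rw [hd] at hdlt
      rw [Nat.cast_withBot] at hdlt
      have hk : k < S.card := WithBot.coe_lt_coe.mp hdlt
      rw [Nat.cast_withBot]
      exact WithBot.coe_le_coe.mpr (by omega)
  have hQdeg : (Q1 - Q2).degree = ((S.card - 1 : ℕ) : WithBot ℕ) :=
    Polynomial.degree_eq_of_le_of_coeff_ne_zero hdle hQne
  have hA : PsiB T c * PsiB (S \ T) d - PsiB T d * PsiB (S \ T) c = C L * (Q1 - Q2) := by
    rw [prodeq c d, prodeq d c, ← mul_sub]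
  rw [hA, Polynomial.degree_C_mul hLne, hQdeg]

theorem stmt_14 (K : Type*) [Field K] [IsAlgClosed K] [DecidableEq K]
    (g : ℕ) (hg : 1 < g)
    (hchar : ((2 * (2 * g + 1) : ℕ) : K) ≠ 0)
    (hstar : ringChar K = 0 ∨
      (Nat.Prime (2 * g + 1) ∧ (ringChar K).Prime ∧ ringChar K ≠ 2 ∧
        orderOf ((ringChar K : ℕ) : ZMod (2 * g + 1)) = 2 * g))
    (I J : Finset K) (hI : I ⊆ Mset K (2 * g + 1)) (hJ : J ⊆ Mset K (2 * g + 1))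
    (hIcard : I.card = g) (hJcard : J.card = g)
    (ε1 ε2 ε3 ε4 : K) (h1 : ε1 ∈ I) (h2 : ε2 ∈ I) (h12 : ε1 ≠ ε2)
    (h3 : ε3 ∈ Mset K (2 * g + 1) \ I) (h4 : ε4 ∈ Mset K (2 * g + 1) \ I) (h34 : ε3 ≠ ε4)
    (η1 η2 η3 η4 : K)
    (hη1 : η1 = (ε1 - 1)⁻¹) (hη2 : η2 = (ε2 - 1)⁻¹)
    (hη3 : η3 = (ε3 - 1)⁻¹) (hη4 : η4 = (ε4 - 1)⁻¹) :
    ((PsiB J η1 * PsiB (Mset K (2 * g + 1) \ J) η2 -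
        PsiB J η2 * PsiB (Mset K (2 * g + 1) \ J) η1) *
      (PsiB J η3 * PsiB (Mset K (2 * g + 1) \ J) η4 -
        PsiB J η4 * PsiB (Mset K (2 * g + 1) \ J) η3) * X -
      (C (EtaV (Mset K (2 * g + 1) \ I) η1) * PsiB J η2 -
        C (EtaV (Mset K (2 * g + 1) \ I) η2) * PsiB J η1) *
      (C (EtaV I η3) * PsiB (Mset K (2 * g + 1) \ J) η4 -
        C (EtaV I η4) * PsiB (Mset K (2 * g + 1) \ J) η3)).degree
      = ((4 * g - 1 : ℕ) : WithBot ℕ) ∧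
    ((PsiB J η1 * PsiB (Mset K (2 * g + 1) \ J) η2 -
        PsiB J η2 * PsiB (Mset K (2 * g + 1) \ J) η1) *
      (PsiB J η3 * PsiB (Mset K (2 * g + 1) \ J) η4 -
        PsiB J η4 * PsiB (Mset K (2 * g + 1) \ J) η3) * X -
      (C (EtaV (Mset K (2 * g + 1) \ I) η1) * PsiB J η2 -
        C (EtaV (Mset K (2 * g + 1) \ I) η2) * PsiB J η1) *
      (C (EtaV I η3) * PsiB (Mset K (2 * g + 1) \ J) η4 -
        C (EtaV I η4) * PsiB (Mset K (2 * g + 1) \ J) η3)) ≠ 0 := by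
  have hn0 : 0 < 2 * g + 1 := by omega
  have hn2 : 2 ≤ 2 * g + 1 := by omega
  have hnK : ((2 * g + 1 : ℕ) : K) ≠ 0 := by
    intro h
    exact hchar (by rw [Nat.cast_mul, h, mul_zero])
  haveI : NeZero (((2 * g + 1 : ℕ) : K)) := ⟨hnK⟩
  obtain ⟨ζ, hζ⟩ := HasEnoughRootsOfUnity.exists_primitiveRoot K (2 * g + 1)
  have hMcard : (Mset K (2 * g + 1)).card = 2 * g := by
    rw [card_Mset hn2 hζ]
    omega
  have hS1 : ∀ ε ∈ Mset K (2 * g + 1), ε ≠ 1 :=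
    fun ε hε => ((mem_Mset_iff hn0).mp hε).2
  -- the key sum inequality
  have hsum : (∑ ε ∈ J, ε) ≠ ∑ ε ∈ Mset K (2 * g + 1) \ J, ε := by
    intro heq
    have hrel : (∑ ε ∈ J, ε) + (∑ ε ∈ J, ε) = -1 := by
      have hs := Finset.sum_sdiff (f := id) hJ
      simp only [id] at hs
      rw [sum_Mset hn2 hζ] at hs
      linear_combination hs + heq
    rcases hstar with h0 | ⟨hq, hp, hp2, hord⟩
    · haveI : CharP K 0 := h0 ▸ ringChar.charP K
      haveI : CharZero K := CharP.charP_to_charZero K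
      have hint : IsIntegral ℤ (∑ ε ∈ J, ε) := by
        refine IsIntegral.sum _ fun ε hε => ?_
        refine ⟨X ^ (2 * g + 1) - C 1, monic_X_pow_sub_C 1 (by omega), ?_⟩
        simp [((mem_Mset_iff hn0).mp (hJ hε)).1]
      exact char0_half_not_integral hint hrel
    · haveI : Fact (ringChar K).Prime := ⟨hp⟩
      haveI : CharP K (ringChar K) := ringChar.charP K
      exact charp_rel_impossible hζ (by omega)
        (hord.trans (by omega)) J hJ heq
  -- eta distinctness
  have etadist : ∀ a b : K, a ∈ Mset K (2 * g + 1) → b ∈ Mset K (2 * g + 1) → a ≠ b →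
      (a - 1)⁻¹ ≠ (b - 1)⁻¹ := by
    intro a b ha hb hab h
    have h1 : a - 1 ≠ 0 := sub_ne_zero.mpr (hS1 a ha)
    have h2 : b - 1 ≠ 0 := sub_ne_zero.mpr (hS1 b hb)
    apply hab
    have := inv_injective h
    linear_combination this
  have hη12 : η1 ≠ η2 := by
    rw [hη1, hη2]; exact etadist _ _ (hI h1) (hI h2) h12
  have hη34 : η3 ≠ η4 := by
    rw [hη3, hη4]
    exact etadist _ _ (Finset.mem_sdiff.mp h3).1 (Finset.mem_sdiff.mp h4).1 h34
  have hcards : 2 * J.card = (Mset K (2 * g + 1)).card := by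
    rw [hJcard, hMcard]
  have hSne : (Mset K (2 * g + 1)).Nonempty :=
    Finset.card_pos.mp (by rw [hMcard]; omega)
  have degA1 := bracket_degree hJ hS1 hSne hcards hη12 hsum
  have degA2 := bracket_degree hJ hS1 hSne hcards hη34 hsum
  rw [hMcard] at degA1 degA2
  -- degree of the first big product
  have degF : ((PsiB J η1 * PsiB (Mset K (2 * g + 1) \ J) η2 -
        PsiB J η2 * PsiB (Mset K (2 * g + 1) \ J) η1) *
      (PsiB J η3 * PsiB (Mset K (2 * g + 1) \ J) η4 -
        PsiB J η4 * PsiB (Mset K (2 * g + 1) \ J) η3) * X).degree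
      = ((4 * g - 1 : ℕ) : WithBot ℕ) := by
    rw [degree_mul, degree_mul, degA1, degA2, degree_X]
    have e : (2 * g - 1) + (2 * g - 1) + 1 = 4 * g - 1 := by omega
    exact_mod_cast congrArg (Nat.cast : ℕ → WithBot ℕ) e
  -- degree bound for the second product
  have hCcard : (Mset K (2 * g + 1) \ J).card = g := by
    rw [Finset.card_sdiff_of_subset hJ, hMcard, hJcard]; omega
  have hfac : ∀ (a b : K) (T : Finset K) (u v : K),
      (C a * PsiB T u - C b * PsiB T v).degree ≤ (T.card : WithBot ℕ) := by
    intro a b T u v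
    refine (degree_sub_le _ _).trans (max_le ?_ ?_) <;>
    · refine (degree_mul_le _ _).trans ?_
      refine le_trans (add_le_add degree_C_le (PsiB_degree_le T _)) ?_
      rw [zero_add]
  have degB : ((C (EtaV (Mset K (2 * g + 1) \ I) η1) * PsiB J η2 -
        C (EtaV (Mset K (2 * g + 1) \ I) η2) * PsiB J η1) *
      (C (EtaV I η3) * PsiB (Mset K (2 * g + 1) \ J) η4 -
        C (EtaV I η4) * PsiB (Mset K (2 * g + 1) \ J) η3)).degree
      ≤ ((2 * g : ℕ) : WithBot ℕ) := by
    refine (degree_mul_le _ _).trans ?_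
    refine le_trans (add_le_add (hfac _ _ _ _ _) (hfac _ _ _ _ _)) ?_
    rw [hJcard, hCcard]
    exact_mod_cast (by omega : g + g ≤ 2 * g)
  have hlt : ((C (EtaV (Mset K (2 * g + 1) \ I) η1) * PsiB J η2 -
        C (EtaV (Mset K (2 * g + 1) \ I) η2) * PsiB J η1) *
      (C (EtaV I η3) * PsiB (Mset K (2 * g + 1) \ J) η4 -
        C (EtaV I η4) * PsiB (Mset K (2 * g + 1) \ J) η3)).degree
      < ((PsiB J η1 * PsiB (Mset K (2 * g + 1) \ J) η2 -
        PsiB J η2 * PsiB (Mset K (2 * g + 1) \ J) η1) *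
      (PsiB J η3 * PsiB (Mset K (2 * g + 1) \ J) η4 -
        PsiB J η4 * PsiB (Mset K (2 * g + 1) \ J) η3) * X).degree := by
    rw [degF]
    refine lt_of_le_of_lt degB ?_
    exact_mod_cast (by omega : 2 * g < 4 * g - 1)
  have hdeg := (degree_sub_eq_left_of_degree_lt hlt).trans degF
  refine ⟨hdeg, fun h0 => ?_⟩
  rw [h0, degree_zero] at hdeg
  have : ((4 * g - 1 : ℕ) : WithBot ℕ) ≠ ⊥ := by
    rw [Nat.cast_withBot]
    exact WithBot.coe_ne_bot
  exact this hdeg.symm
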